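/- Define σ_m² = 4π² Σ_{ℓ=0}^{m} [ ((2m−2ℓ+1)!!(2ℓ−1)!!/(2m+2)!!)² + ((2m−2ℓ−1)!!(2ℓ+1)!!/(2m+2)!!)² ]. Then σ_m² ∼ 8π² ((2m+1)!!/(2m+2)!!)² ∼ 8π/m as m → ∞ (i.e., m·σ_m² → 8π). -/

import Mathlib

open Nat Filter

/-- `σ_m² = 4π² Σ_{ℓ=0}^{m} [((2m−2ℓ+1)‼(2ℓ−1)‼/(2m+2)‼)² + ((2m−2ℓ−1)‼(2ℓ+1)‼/(2m+2)‼)²]`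
(double factorials, with the convention `(−1)‼ = 1` realized by truncated subtraction). -/
noncomputable def sigmaSq (m : ℕ) : ℝ :=
  4 * Real.pi ^ 2 * ∑ ℓ ∈ Finset.range (m + 1),
    (((((2 * m - 2 * ℓ + 1)‼ * (2 * ℓ - 1)‼ : ℕ) : ℝ) / ((2 * m + 2)‼ : ℝ)) ^ 2 +
     ((((2 * m - 2 * ℓ - 1)‼ * (2 * ℓ + 1)‼ : ℕ) : ℝ) / ((2 * m + 2)‼ : ℝ)) ^ 2)

namespace SigmaAux

lemma odd_dF_mul_le : ∀ j k : ℕ, (2*j+1)‼ * (2*k+1)‼ ≤ (2*(j+k)+1)‼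
  | 0, k => by simp
  | j+1, k => by
    have h1 : 2*(j+1)+1 = (2*j+1)+2 := by ring
    have h2 : 2*((j+1)+k)+1 = (2*(j+k)+1)+2 := by ring
    rw [h1, h2, Nat.doubleFactorial_add_two, Nat.doubleFactorial_add_two, mul_assoc]
    calc (2*j+1+2) * ((2*j+1)‼ * (2*k+1)‼) ≤ (2*j+1+2) * (2*(j+k)+1)‼ :=
          Nat.mul_le_mul_left _ (odd_dF_mul_le j k)
      _ ≤ (2*(j+k)+1+2) * (2*(j+k)+1)‼ :=
          Nat.mul_le_mul_right _ (by omega)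

lemma A_le (m ℓ : ℕ) (h1 : 1 ≤ ℓ) (h2 : ℓ ≤ m) :
    (2*m+1) * ((2 * m - 2 * ℓ + 1)‼ * (2 * ℓ - 1)‼) ≤ (2*m+1)‼ := by
  obtain ⟨j, rfl⟩ : ∃ j, ℓ = j + 1 := ⟨ℓ - 1, by omega⟩
  obtain ⟨k, rfl⟩ : ∃ k, m = j + 1 + k := ⟨m - (j+1), by omega⟩
  have e1 : 2 * (j+1+k) - 2 * (j+1) + 1 = 2*k+1 := by omega
  have e2 : 2 * (j+1) - 1 = 2*j+1 := by omega
  have e3 : 2*(j+1+k)+1 = (2*(j+k)+1) + 2 := by ring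
  rw [e1, e2, e3, Nat.doubleFactorial_add_two]
  calc (2*(j+k)+1+2) * ((2*k+1)‼ * (2*j+1)‼)
      ≤ (2*(j+k)+1+2) * (2*(k+j)+1)‼ := by
        refine Nat.mul_le_mul_left _ ?_
        rw [mul_comm]; exact odd_dF_mul_le j k |>.trans (by rw [Nat.add_comm j k])
    _ = (2*(j+k)+1+2) * (2*(j+k)+1)‼ := by rw [Nat.add_comm k j]

lemma W_eq_dF : ∀ m : ℕ, Real.Wallis.W m =
    ((2*m)‼ : ℝ)^2 / (((2*m-1)‼ : ℝ) * ((2*m+1)‼ : ℝ))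
  | 0 => by simp [Real.Wallis.W]
  | m+1 => by
    rw [Real.Wallis.W_succ, W_eq_dF m]
    have e1 : 2*(m+1) = 2*m+2 := by ring
    have e2 : 2*m+2-1 = 2*m+1 := by omega
    have e3 : 2*m+2+1 = (2*m+1)+2 := by omega
    have h5 : ((2*m+1)‼ : ℕ) = (2*m+1) * (2*m-1)‼ := by
      simpa using Nat.doubleFactorial_add_one (2*m)
    rw [e1, e2, e3, Nat.doubleFactorial_add_two, Nat.doubleFactorial_add_two, h5]
    have h0 : ((2*m)‼ : ℝ) ≠ 0 := Nat.cast_ne_zero.2 (Nat.doubleFactorial_pos _).ne'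
    have h1 : ((2*m-1)‼ : ℝ) ≠ 0 := Nat.cast_ne_zero.2 (Nat.doubleFactorial_pos _).ne'
    have h3 : (2*(m:ℝ)+1) ≠ 0 := by positivity
    have h4 : (2*(m:ℝ)+3) ≠ 0 := by positivity
    push_cast
    field_simp
    ring

noncomputable def a (m ℓ : ℕ) : ℝ :=
  (((2 * m - 2 * ℓ + 1)‼ * (2 * ℓ - 1)‼ : ℕ) : ℝ) / ((2 * m + 2)‼ : ℝ)

noncomputable def S (m : ℕ) : ℝ := ∑ ℓ ∈ Finset.range (m+1), a m ℓ ^ 2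

lemma b_eq (m ℓ : ℕ) (h : ℓ < m) :
    ((((2 * m - 2 * ℓ - 1)‼ * (2 * ℓ + 1)‼ : ℕ) : ℝ) / ((2 * m + 2)‼ : ℝ)) = a m (ℓ+1) := by
  unfold a
  have e1 : 2 * m - 2 * (ℓ+1) + 1 = 2 * m - 2 * ℓ - 1 := by omega
  have e2 : 2 * (ℓ+1) - 1 = 2 * ℓ + 1 := by omega
  rw [e1, e2]

lemma b_last (m : ℕ) :
    ((((2 * m - 2 * m - 1)‼ * (2 * m + 1)‼ : ℕ) : ℝ) / ((2 * m + 2)‼ : ℝ)) = a m 0 := by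
  unfold a
  have e1 : 2 * m - 2 * m - 1 = 0 := by omega
  have e2 : 2 * m - 2 * 0 + 1 = 2 * m + 1 := by omega
  have e3 : 2 * 0 - 1 = 0 := by omega
  rw [e1, e2, e3, mul_comm]

lemma sigmaSq_eq (m : ℕ) : sigmaSq m = 8 * Real.pi ^ 2 * S m := by
  unfold sigmaSq
  rw [Finset.sum_add_distrib]
  have hb : ∑ ℓ ∈ Finset.range (m+1),
      ((((2 * m - 2 * ℓ - 1)‼ * (2 * ℓ + 1)‼ : ℕ) : ℝ) / ((2 * m + 2)‼ : ℝ)) ^ 2 = S m := by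
    rw [Finset.sum_range_succ, b_last]
    unfold S
    rw [Finset.sum_range_succ']
    congr 1
    refine Finset.sum_congr rfl fun ℓ hℓ => ?_
    rw [b_eq m ℓ (Finset.mem_range.1 hℓ)]
  rw [hb]
  unfold S a
  ring

lemma a_pos (m ℓ : ℕ) : 0 < a m ℓ := by
  unfold a
  have := Nat.doubleFactorial_pos (2 * m - 2 * ℓ + 1)
  have := Nat.doubleFactorial_pos (2 * ℓ - 1)
  have := Nat.doubleFactorial_pos (2 * m + 2)
  positivity

lemma a0_eq (m : ℕ) : a m 0 = ((2*m+1)‼ : ℝ) / ((2*m+2)‼ : ℝ) := by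
  unfold a
  have e2 : 2 * m - 2 * 0 + 1 = 2 * m + 1 := by omega
  have e3 : 2 * 0 - 1 = 0 := by omega
  rw [e2, e3]
  simp

lemma a_le (m ℓ : ℕ) (h1 : 1 ≤ ℓ) (h2 : ℓ ≤ m) :
    a m ℓ ≤ a m 0 / (2*(m:ℝ)+1) := by
  rw [a0_eq]
  unfold a
  rw [div_div]
  have hD : (0:ℝ) < ((2*m+2)‼ : ℝ) := by exact_mod_cast Nat.doubleFactorial_pos _
  have h2m : (0:ℝ) < 2*(m:ℝ)+1 := by positivity
  rw [div_le_div_iff₀ hD (by positivity)]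
  have key := A_le m ℓ h1 h2
  have : ((2*m+1) * ((2 * m - 2 * ℓ + 1)‼ * (2 * ℓ - 1)‼) : ℝ) ≤ ((2*m+1)‼ : ℝ) := by
    exact_mod_cast key
  push_cast at this ⊢
  nlinarith [hD]

lemma S_lower (m : ℕ) : a m 0 ^ 2 ≤ S m := by
  unfold S
  rw [Finset.sum_range_succ']
  have h : (0:ℝ) ≤ ∑ ℓ ∈ Finset.range m, a m (ℓ+1) ^ 2 :=
    Finset.sum_nonneg fun ℓ _ => sq_nonneg _
  linarith

lemma S_upper (m : ℕ) : S m ≤ a m 0 ^ 2 * (1 + m / (2*(m:ℝ)+1)^2) := by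
  unfold S
  rw [Finset.sum_range_succ']
  have hb : ∑ ℓ ∈ Finset.range m, a m (ℓ+1) ^ 2 ≤ m * (a m 0 / (2*(m:ℝ)+1)) ^ 2 := by
    calc ∑ ℓ ∈ Finset.range m, a m (ℓ+1) ^ 2
        ≤ ∑ _ℓ ∈ Finset.range m, (a m 0 / (2*(m:ℝ)+1)) ^ 2 := by
          refine Finset.sum_le_sum fun ℓ hℓ => ?_
          have hm := Finset.mem_range.1 hℓ
          exact pow_le_pow_left₀ (a_pos m (ℓ+1)).le
            (a_le m (ℓ+1) (by omega) (by omega)) 2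
      _ = m * (a m 0 / (2*(m:ℝ)+1)) ^ 2 := by
          rw [Finset.sum_const, Finset.card_range, nsmul_eq_mul]
  have expand : a m 0 ^ 2 * (1 + m / (2*(m:ℝ)+1)^2)
      = a m 0 ^ 2 + m * (a m 0 / (2*(m:ℝ)+1)) ^ 2 := by
    field_simp
  linarith

lemma tendsto_ratio : Tendsto (fun m : ℕ => S m / a m 0 ^ 2) atTop (nhds 1) := by
  have ha : ∀ m : ℕ, (0:ℝ) < a m 0 ^ 2 := fun m => pow_pos (a_pos m 0) 2
  refine tendsto_of_tendsto_of_tendsto_of_le_of_le' (g := fun _ : ℕ => (1:ℝ))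
      (h := fun m : ℕ => 1 + m / (2*(m:ℝ)+1)^2) tendsto_const_nhds ?_ ?_ ?_
  · have h0 : Tendsto (fun m : ℕ => (m:ℝ) / (2*(m:ℝ)+1)^2) atTop (nhds 0) := by
      refine squeeze_zero (fun m => by positivity) (fun m => ?_)
        tendsto_one_div_atTop_nhds_zero_nat
      rcases Nat.eq_zero_or_pos m with h | h
      · subst h; norm_num
      · have hm : (0:ℝ) < m := by exact_mod_cast h
        rw [div_le_div_iff₀ (by positivity) hm]
        nlinarith
    have := tendsto_const_nhds.add h0 (α := ℕ) (f := fun _ : ℕ => (1:ℝ))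
    simpa using this
  · filter_upwards with m
    exact (one_le_div (ha m)).2 (S_lower m)
  · filter_upwards with m
    rw [div_le_iff₀ (ha m)]
    have := S_upper m
    linarith [S_upper m]

lemma tendsto_m_a0 : Tendsto (fun m : ℕ => (m:ℝ) * a m 0 ^ 2) atTop (nhds (1/Real.pi)) := by
  have key : ∀ m : ℕ, (m:ℝ) * a m 0 ^ 2 =
      ((1 - 1/((m:ℝ)+1)) * (2 - 1/((m:ℝ)+1)) / 4) / Real.Wallis.W m := by
    intro m
    rw [a0_eq, W_eq_dF]
    have h5 : ((2*m+1)‼ : ℕ) = (2*m+1) * (2*m-1)‼ := by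
      simpa using Nat.doubleFactorial_add_one (2*m)
    have h6 : ((2*m+2)‼ : ℕ) = (2*m+2) * (2*m)‼ := Nat.doubleFactorial_add_two _
    rw [h5, h6]
    have h0 : ((2*m)‼ : ℝ) ≠ 0 := Nat.cast_ne_zero.2 (Nat.doubleFactorial_pos _).ne'
    have h1 : ((2*m-1)‼ : ℝ) ≠ 0 := Nat.cast_ne_zero.2 (Nat.doubleFactorial_pos _).ne'
    have h3 : (2*(m:ℝ)+1) ≠ 0 := by positivity
    have h4 : (2*(m:ℝ)+2) ≠ 0 := by positivity
    have h7 : ((m:ℝ)+1) ≠ 0 := by positivity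
    push_cast
    field_simp
    ring
  rw [funext key]
  have h1 : Tendsto (fun m : ℕ => 1/((m:ℝ)+1)) atTop (nhds 0) :=
    tendsto_one_div_add_atTop_nhds_zero_nat
  have hnum : Tendsto (fun m : ℕ => (1 - 1/((m:ℝ)+1)) * (2 - 1/((m:ℝ)+1)) / 4) atTop
      (nhds ((1-0)*(2-0)/4)) :=
    ((tendsto_const_nhds.sub h1).mul (tendsto_const_nhds.sub h1)).div_const 4
  have hW := Real.Wallis.tendsto_W_nhds_pi_div_two
  have hpi : Real.pi / 2 ≠ 0 := by positivity
  have := hnum.div hW hpi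
  convert this using 2
  · rfl
  rw [eq_div_iff hpi]
  field_simp
  ring

end SigmaAux

open SigmaAux in
/-- `σ_m² ∼ 8π² ((2m+1)‼/(2m+2)‼)² ∼ 8π/m` as `m → ∞`. -/
theorem sigmaSq_asymptotic :
    Tendsto (fun m : ℕ =>
      sigmaSq m / (8 * Real.pi ^ 2 * (((2 * m + 1)‼ : ℝ) / ((2 * m + 2)‼ : ℝ)) ^ 2))
      atTop (nhds 1) ∧
    Tendsto (fun m : ℕ => (m : ℝ) * sigmaSq m) atTop (nhds (8 * Real.pi)) := by
  have h8pi : (8 * Real.pi ^ 2 : ℝ) ≠ 0 := by positivity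
  constructor
  · have heq : ∀ m : ℕ, sigmaSq m /
        (8 * Real.pi ^ 2 * (((2 * m + 1)‼ : ℝ) / ((2 * m + 2)‼ : ℝ)) ^ 2)
        = S m / a m 0 ^ 2 := by
      intro m
      rw [sigmaSq_eq, ← a0_eq, mul_div_mul_left _ _ h8pi]
    rw [funext heq]
    exact tendsto_ratio
  · have heq2 : ∀ m : ℕ, (m : ℝ) * sigmaSq m
        = 8 * Real.pi ^ 2 * (((m:ℝ) * a m 0 ^ 2) * (S m / a m 0 ^ 2)) := by
      intro m
      rw [sigmaSq_eq]
      have h := (pow_pos (a_pos m 0) 2).ne'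
      have h' := (a_pos m 0).ne'
      field_simp
    rw [funext heq2]
    have := (tendsto_m_a0.mul tendsto_ratio).const_mul (8 * Real.pi ^ 2)
    convert this using 1
    rw [mul_one]
    field_simp [Real.pi_ne_zero]
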